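/- Let G be a graph with n vertices and adjacency matrix A, and suppose the complement graph is not a disjoint union of complete graphs, i.e. the adjacency matrix Ā of the complement has an eigenvalue strictly less than −1. Then the semidefinite program sup{⟨J, Z⟩ : ⟨I + Ā, Z⟩ = 1, Z ⪰ 0} is unbounded (the supremum is +∞). -/

import Mathlib

open scoped Matrix

section Aux

variable {V : Type*} [Fintype V] [DecidableEq V]

lemma trace_mul_vecMulVec (M : Matrix V V ℝ) (u : V → ℝ) :
    (M * Matrix.vecMulVec u u).trace = ∑ i, (M *ᵥ u) i * u i := by
  simp only [Matrix.trace, Matrix.diag, Matrix.mul_apply, Matrix.vecMulVec_apply,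
    Matrix.mulVec, dotProduct]
  refine Finset.sum_congr rfl fun i _ => ?_
  rw [Finset.sum_mul]
  exact Finset.sum_congr rfl fun k _ => by ring

lemma psd_comb (s a : ℝ) (hs : 0 ≤ s) (ha : 0 ≤ a) (u : V → ℝ) :
    (s • (Matrix.of fun _ _ => (1:ℝ) : Matrix V V ℝ)
      + a • Matrix.vecMulVec u u).PosSemidef := by
  refine Matrix.PosSemidef.of_dotProduct_mulVec_nonneg ?_ ?_
  · ext i j
    simp [Matrix.conjTranspose_apply, Matrix.vecMulVec_apply, mul_comm]
  · intro x
    have expand : x ⬝ᵥ ((s • (Matrix.of fun _ _ => (1:ℝ) : Matrix V V ℝ)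
        + a • Matrix.vecMulVec u u) *ᵥ x)
        = s * ((∑ i, x i) * (∑ j, x j)) + a * ((∑ i, u i * x i) * (∑ j, u j * x j)) := by
      simp only [dotProduct, Matrix.mulVec, Matrix.add_apply, Matrix.smul_apply,
        Matrix.of_apply, Matrix.vecMulVec_apply, smul_eq_mul]
      rw [Finset.sum_mul_sum, Finset.sum_mul_sum, Finset.mul_sum, Finset.mul_sum,
        ← Finset.sum_add_distrib]
      refine Finset.sum_congr rfl fun i _ => ?_
      rw [Finset.mul_sum, Finset.mul_sum, Finset.mul_sum, ← Finset.sum_add_distrib]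
      refine Finset.sum_congr rfl fun j _ => ?_
      ring
    rw [show (star x) = x from star_trivial x, expand]
    exact add_nonneg (mul_nonneg hs (mul_self_nonneg _))
      (mul_nonneg ha (mul_self_nonneg _))

end Aux

/-- If the adjacency matrix `Ā` of the complement of `G` has an eigenvalue
strictly less than `-1`, then the SDP
`sup{⟨J, Z⟩ : ⟨I + Ā, Z⟩ = 1, Z ⪰ 0}` is unbounded. -/
theorem sdp_unbounded {V : Type*} [Fintype V] [DecidableEq V]
    (G : SimpleGraph V) [DecidableRel G.Adj]
    (Abar : Matrix V V ℝ) (hAbar : Abar = Gᶜ.adjMatrix ℝ)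
    (μ : ℝ) (u : V → ℝ) (hu : u ≠ 0)
    (hμ : μ < -1) (heig : Abar.mulVec u = μ • u) :
    let J : Matrix V V ℝ := Matrix.of fun _ _ => 1
    ∀ t : ℝ, ∃ Z : Matrix V V ℝ, Z.PosSemidef ∧
      ((1 + Abar) * Z).trace = 1 ∧ t < (J * Z).trace := by
  intro J t
  -- basic data
  obtain ⟨i₀, hi₀⟩ : ∃ i, u i ≠ 0 := by
    by_contra h
    push_neg at h
    exact hu (funext h)
  have hne : Nonempty V := ⟨i₀⟩
  set n : ℝ := (Fintype.card V : ℝ) with hn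
  have hn1 : 1 ≤ n := by
    have h : 1 ≤ Fintype.card V := Fintype.card_pos_iff.mpr hne
    rw [hn]
    exact_mod_cast h
  have hn0 : 0 < n := lt_of_lt_of_le one_pos hn1
  -- u2 > 0
  set u2 : ℝ := ∑ i, u i * u i with hu2def
  have hu2 : 0 < u2 := by
    refine Finset.sum_pos' (fun i _ => mul_self_nonneg _) ⟨i₀, Finset.mem_univ _, ?_⟩
    exact mul_self_pos.2 hi₀
  -- d < 0
  set d : ℝ := (1 + μ) * u2 with hddef
  have hd : d < 0 := mul_neg_of_neg_of_pos (by linarith) hu2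
  -- c = trace ((1+Abar) * J) ≥ n > 0
  set c : ℝ := ((1 + Abar) * J).trace with hcdef
  have hAnn : ∀ i j, 0 ≤ Abar i j := by
    intro i j
    rw [hAbar]
    simp [SimpleGraph.adjMatrix_apply]
    positivity
  have hc_eq : c = ∑ i, ∑ k, (1 + Abar) i k := by
    simp only [hcdef, Matrix.trace, Matrix.diag, Matrix.mul_apply, J, Matrix.of_apply, mul_one]
  have hcn : n ≤ c := by
    rw [hc_eq]
    have h1 : ∀ i : V, (1:ℝ) ≤ ∑ k, (1 + Abar) i k := by
      intro i
      have : ∑ k, (1 + Abar) i k = (∑ k, (1 : Matrix V V ℝ) i k) + ∑ k, Abar i k := by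
        simp [Finset.sum_add_distrib]
      rw [this]
      have h2 : (∑ k, (1 : Matrix V V ℝ) i k) = 1 := by
        simp [Matrix.one_apply]
      rw [h2]
      have h3 : 0 ≤ ∑ k, Abar i k := Finset.sum_nonneg fun k _ => hAnn i k
      linarith
    calc n = ∑ _i : V, (1:ℝ) := by simp [hn]
    _ ≤ _ := Finset.sum_le_sum fun i _ => h1 i
  have hc0 : 0 < c := lt_of_lt_of_le hn0 hcn
  -- choose s and a
  set s : ℝ := max ((t + 1) / (n * n)) (1 / c) with hsdef
  have hs0 : 0 < s := lt_of_lt_of_le (by positivity) (le_max_right _ _)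
  have hsc : 1 ≤ s * c := by
    have : 1 / c ≤ s := le_max_right _ _
    calc (1:ℝ) = (1 / c) * c := by field_simp
    _ ≤ s * c := by nlinarith
  have hsn : t + 1 ≤ s * (n * n) := by
    have h1 : (t + 1) / (n * n) ≤ s := le_max_left _ _
    calc t + 1 = ((t + 1) / (n * n)) * (n * n) := by field_simp
    _ ≤ s * (n * n) := by nlinarith
  set a : ℝ := (1 - s * c) / d with hadef
  have ha0 : 0 ≤ a := by
    rw [hadef]
    exact div_nonneg_iff.mpr (Or.inr ⟨by linarith, hd.le⟩)
  refine ⟨s • J + a • Matrix.vecMulVec u u, psd_comb s a hs0.le ha0 u, ?_, ?_⟩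
  · -- constraint
    have hMu : (1 + Abar) *ᵥ u = (1 + μ) • u := by
      rw [Matrix.add_mulVec, Matrix.one_mulVec, heig]
      ext i
      simp
      ring
    have htru : ((1 + Abar) * Matrix.vecMulVec u u).trace = d := by
      rw [trace_mul_vecMulVec, hMu, hddef, hu2def, Finset.mul_sum]
      exact Finset.sum_congr rfl fun i _ => by simp [smul_eq_mul]; ring
    rw [Matrix.mul_add, Matrix.mul_smul, Matrix.mul_smul, Matrix.trace_add,
      Matrix.trace_smul, Matrix.trace_smul, htru, ← hcdef]
    simp only [smul_eq_mul]
    rw [hadef, div_mul_eq_mul_div, mul_div_assoc, div_self hd.ne, mul_one]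
    ring
  · -- objective
    have htrJJ : (J * J).trace = n * n := by
      simp only [Matrix.trace, Matrix.diag, Matrix.mul_apply, J, Matrix.of_apply, mul_one, hn]
      simp [Finset.sum_const, mul_comm]
    have htrJu : (J * Matrix.vecMulVec u u).trace = (∑ i, u i) * (∑ i, u i) := by
      have : J *ᵥ u = fun _ => ∑ k, u k := by
        ext i
        simp [Matrix.mulVec, dotProduct, J]
      rw [trace_mul_vecMulVec, this]
      simp [← Finset.mul_sum]
    rw [Matrix.mul_add, Matrix.mul_smul, Matrix.mul_smul, Matrix.trace_add,
      Matrix.trace_smul, Matrix.trace_smul, htrJJ, htrJu]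
    simp only [smul_eq_mul]
    nlinarith [mul_nonneg ha0 (mul_self_nonneg (∑ i, u i))]
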